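/- Let W be a real symmetric positive definite n×n matrix and T a real symmetric positive semidefinite n×n matrix with T singular, and let α > 0. Then the spectral radius of G_α = (W + αT)^{-1}(T − αW)(αW + T)^{-1}(W − αT) equals at least |λ| where λ is the eigenvalue of G_α corresponding to a zero eigenvalue μ = 0 of S = W^{-1/2} T W^{-1/2}, namely λ = ((0 − α)(1 − 0))/((0 + α)(1 + 0)) = −1; in particular ρ(G_α) ≥ 1 and the TSCSP iteration fails to converge. -/

import Mathlib

open Matrix

lemma posdef_smul {n : ℕ} {M : Matrix (Fin n) (Fin n) ℝ} (hM : M.PosDef) {α : ℝ}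
    (hα : 0 < α) : (α • M).PosDef := by
  refine ⟨?_, fun x hx => ?_⟩
  · unfold Matrix.IsHermitian
    rw [conjTranspose_smul, hM.1.eq]
    simp
  · exact (hM.smul hα).2 hx

lemma possemidef_smul {n : ℕ} {M : Matrix (Fin n) (Fin n) ℝ} (hM : M.PosSemidef) {α : ℝ}
    (hα : 0 ≤ α) : (α • M).PosSemidef := by
  refine ⟨?_, fun x => ?_⟩
  · unfold Matrix.IsHermitian
    rw [conjTranspose_smul, hM.1.eq]
    simp
  · exact (hM.smul hα).2 x

theorem stmt16 {n : ℕ} (W T : Matrix (Fin n) (Fin n) ℝ) (hW : W.PosDef)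
    (hT : T.PosSemidef) (hTsing : T.det = 0) (α : ℝ) (hα : 0 < α) :
    (((0 : ℝ) - α) * (1 - α * 0)) / (((0 : ℝ) + α) * (1 + α * 0)) = -1 ∧
    (-1 : ℂ) ∈ spectrum ℂ
      (((W + α • T)⁻¹ * (T - α • W) * (α • W + T)⁻¹ * (W - α • T)).map Complex.ofReal) ∧
    1 ≤ spectralRadius ℂ
      (((W + α • T)⁻¹ * (T - α • W) * (α • W + T)⁻¹ * (W - α • T)).map Complex.ofReal) := by
  have h1 : (((0 : ℝ) - α) * (1 - α * 0)) / (((0 : ℝ) + α) * (1 + α * 0)) = -1 := by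
    field_simp
    ring
  -- get eigenvector
  obtain ⟨v, hv0, hTv⟩ := (Matrix.exists_mulVec_eq_zero_iff).mpr hTsing
  set G := (W + α • T)⁻¹ * (T - α • W) * (α • W + T)⁻¹ * (W - α • T) with hG
  have hA : (α • W + T).PosDef := (posdef_smul hW hα).add_posSemidef hT
  have hB : (W + α • T).PosDef := hW.add_posSemidef (possemidef_smul hT hα.le)
  have hAunit : IsUnit (α • W + T).det := hA.det_pos.ne'.isUnit
  have hBunit : IsUnit (W + α • T).det := hB.det_pos.ne'.isUnit
  have key : G *ᵥ v = -v := by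
    have e1 : (W - α • T) *ᵥ v = W *ᵥ v := by
      rw [sub_mulVec, smul_mulVec, hTv, smul_zero, sub_zero]
    have e2 : (α • W + T)⁻¹ *ᵥ (W *ᵥ v) = α⁻¹ • v := by
      have : (α • W + T) *ᵥ (α⁻¹ • v) = W *ᵥ v := by
        rw [mulVec_smul, add_mulVec, hTv, add_zero, smul_mulVec, smul_smul,
          inv_mul_cancel₀ hα.ne', one_smul]
      rw [← this, mulVec_mulVec, Matrix.nonsing_inv_mul _ hAunit, one_mulVec]
    have e3 : (T - α • W) *ᵥ (α⁻¹ • v) = -(W *ᵥ v) := by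
      rw [mulVec_smul, sub_mulVec, hTv, zero_sub, smul_neg, smul_mulVec, smul_smul,
        inv_mul_cancel₀ hα.ne', one_smul]
    have e4 : (W + α • T)⁻¹ *ᵥ (-(W *ᵥ v)) = -v := by
      have : (W + α • T) *ᵥ (-v) = -(W *ᵥ v) := by
        rw [mulVec_neg, add_mulVec, smul_mulVec, hTv, smul_zero, add_zero]
      rw [← this, mulVec_mulVec, Matrix.nonsing_inv_mul _ hBunit, one_mulVec]
    calc G *ᵥ v = (W + α • T)⁻¹ *ᵥ ((T - α • W) *ᵥ ((α • W + T)⁻¹ *ᵥ ((W - α • T) *ᵥ v))) := by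
          simp [hG, ← mulVec_mulVec, Matrix.mul_assoc]
      _ = -v := by rw [e1, e2, e3, e4]
  -- complexify
  set Gc := G.map Complex.ofReal with hGc
  set vc : Fin n → ℂ := fun i => (v i : ℂ) with hvc
  have hvc0 : vc ≠ 0 := by
    intro h
    apply hv0
    funext i
    have := congrFun h i
    simpa [hvc] using this
  have keyc : Gc *ᵥ vc = -vc := by
    funext i
    have := (Complex.ofRealHom.map_mulVec G v i).symm
    simp only [hGc, hvc]
    rw [show (Gc *ᵥ vc) i = (G.map Complex.ofRealHom *ᵥ (Complex.ofRealHom ∘ v)) i from rfl,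
      ← RingHom.map_mulVec, key]
    simp
  have hdet : ((-1 : ℂ) • (1 : Matrix (Fin n) (Fin n) ℂ) - Gc).det = 0 := by
    rw [← Matrix.exists_mulVec_eq_zero_iff]
    refine ⟨vc, hvc0, ?_⟩
    rw [sub_mulVec, smul_mulVec, one_mulVec, keyc]
    simp
  have hmem : (-1 : ℂ) ∈ spectrum ℂ Gc := by
    rw [spectrum.mem_iff]
    intro hu
    rw [Matrix.isUnit_iff_isUnit_det] at hu
    rw [show (algebraMap ℂ (Matrix (Fin n) (Fin n) ℂ)) (-1) - Gc
        = (-1 : ℂ) • (1 : Matrix (Fin n) (Fin n) ℂ) - Gc by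
      rw [Algebra.algebraMap_eq_smul_one]] at hu
    rw [hdet] at hu
    exact hu.ne_zero rfl
  refine ⟨h1, hmem, ?_⟩
  have := le_iSup₂ (f := fun (k : ℂ) (_ : k ∈ spectrum ℂ Gc) => (‖k‖₊ : ENNReal)) (-1) hmem
  simpa [spectralRadius] using this
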